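/- Let A be a complex unital Banach algebra, a ∈ A and ζ ∈ ℂ with ‖a‖ < |ζ|. Then ζ·1 − a is invertible, the series Σ_{j=0}^∞ (2/((2j+1)·ζ^{2j+1}))·a^{2j+1} converges absolutely in A, and exp( Σ_{j=0}^∞ (2/((2j+1)·ζ^{2j+1}))·a^{2j+1} ) = (ζ·1 + a)·(ζ·1 − a)⁻¹. -/

import Mathlib

open Set

namespace CayleyAux

variable {A : Type*} [NormedRing A] [NormedAlgebra ℂ A] [CompleteSpace A]

theorem commute_tsum_right {b : A} {f : ℕ → A} (h : ∀ j, Commute b (f j)) :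
    Commute b (∑' j, f j) := by
  by_cases hf : Summable f
  · unfold Commute SemiconjBy
    rw [← hf.tsum_mul_left, ← hf.tsum_mul_right]
    exact tsum_congr fun j => (h j).eq
  · rw [tsum_eq_zero_of_not_summable hf]
    exact Commute.zero_right b

/-- Chain rule for the exponential along a path with pairwise commuting values. -/
theorem hasDerivAt_exp_comp {S : ℝ → A} {d : A} {t : ℝ} (hS : HasDerivAt S d t)
    (hcomm : ∀ u : ℝ, Commute (S t) (S u)) :
    HasDerivAt (fun u => NormedSpace.exp (S u)) (NormedSpace.exp (S t) * d) t := by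
  have key : (fun u => NormedSpace.exp (S u))
      = fun u => NormedSpace.exp (S t) * NormedSpace.exp (S u - S t) := by
    funext u
    rw [← NormedSpace.exp_add_of_commute_of_mem_ball (𝕂 := ℂ) ((hcomm u).sub_right (Commute.refl (S t)))
      (by rw [NormedSpace.expSeries_radius_eq_top, Metric.eball_top_eq_univ]; exact Set.mem_univ _)
      (by rw [NormedSpace.expSeries_radius_eq_top, Metric.eball_top_eq_univ]; exact Set.mem_univ _)]
    congr 1
    abel
  rw [key]
  have h0 : HasFDerivAt (NormedSpace.exp : A → A) (1 : A →L[ℝ] A) 0 := by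
    refine hasFDerivAt_exp_zero_of_radius_pos (𝕂 := ℝ) ?_
    rw [NormedSpace.expSeries_radius_eq_top]
    exact ENNReal.zero_lt_top
  have h1 : HasDerivAt (fun u => S u - S t) d t := hS.sub_const (S t)
  have h0' : HasFDerivAt (NormedSpace.exp : A → A) (1 : A →L[ℝ] A)
      ((fun u => S u - S t) t) := by simpa using h0
  have h2 := h0'.comp_hasDerivAt t h1
  have h2' : HasDerivAt (fun u => NormedSpace.exp (S u - S t)) d t := by
    exact h2
  simpa using h2'.const_mul (NormedSpace.exp (S t))

/-- the odd series -/
noncomputable def cayS (x : A) (t : ℝ) : A :=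
  ∑' j : ℕ, ((2 / (2 * (j : ℝ) + 1)) * t ^ (2 * j + 1)) • x ^ (2 * j + 1)

/-- its `t`-derivative -/
noncomputable def cayD (x : A) (t : ℝ) : A :=
  ∑' j : ℕ, ((2 : ℝ) * t ^ (2 * j)) • x ^ (2 * j + 1)

theorem commute_x_cayS (x : A) (t : ℝ) : Commute x (cayS x t) :=
  commute_tsum_right fun j => ((Commute.refl x).pow_right _).smul_right _

theorem commute_cayS (x : A) (t u : ℝ) : Commute (cayS x t) (cayS x u) :=
  commute_tsum_right fun j => (((commute_x_cayS x t).symm).pow_right _).smul_right _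

theorem cayS_zero (x : A) : cayS x 0 = 0 := by
  unfold cayS
  have : ∀ j : ℕ, ((2 / (2 * (j : ℝ) + 1)) * (0:ℝ) ^ (2 * j + 1)) • x ^ (2 * j + 1) = 0 := by
    intro j
    rw [zero_pow (by omega), mul_zero, zero_smul]
  rw [tsum_congr this, tsum_zero]

theorem hasDerivAt_cayS (x : A) (hx : ‖x‖ < 1) {t : ℝ} (ht : t ∈ Ioo (-(2/(1+‖x‖))) (2/(1+‖x‖))) :
    HasDerivAt (cayS x) (cayD x t) t := by
  set r : ℝ := 2 / (1 + ‖x‖) with hr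
  have hx0 : (0:ℝ) ≤ ‖x‖ := norm_nonneg x
  have hr1 : 1 < r := by
    rw [hr, lt_div_iff₀ (by linarith)]
    linarith
  have hrx : r * ‖x‖ < 1 := by
    rw [hr, div_mul_eq_mul_div, div_lt_one (by linarith)]
    linarith
  have hrx0 : (0:ℝ) ≤ r * ‖x‖ := by positivity
  have husum : Summable (fun j : ℕ => 2 * ‖x‖ * (r * ‖x‖) ^ (2 * j)) := by
    have h2 : Summable (fun j : ℕ => ((r * ‖x‖) ^ 2) ^ j) :=
      summable_geometric_of_lt_one (by positivity) (by nlinarith)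
    exact (h2.mul_left (2 * ‖x‖)).congr fun j => by
      rw [← pow_mul]
  have hg : ∀ (j : ℕ), ∀ y ∈ Ioo (-r) r,
      HasDerivAt (fun t : ℝ => ((2 / (2 * (j : ℝ) + 1)) * t ^ (2 * j + 1)) • x ^ (2 * j + 1))
        (((2 : ℝ) * y ^ (2 * j)) • x ^ (2 * j + 1)) y := by
    intro j y _
    have hne : (2 * (j : ℝ) + 1) ≠ 0 := by positivity
    have h1 := ((hasDerivAt_pow (2 * j + 1) y).const_mul (2 / (2 * (j : ℝ) + 1))).smul_const
      (x ^ (2 * j + 1))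
    convert h1 using 2
    case e'_4 => rfl
    push_cast [Nat.add_sub_cancel]
    field_simp
  have hg' : ∀ (j : ℕ), ∀ y ∈ Ioo (-r) r,
      ‖((2 : ℝ) * y ^ (2 * j)) • x ^ (2 * j + 1)‖ ≤ 2 * ‖x‖ * (r * ‖x‖) ^ (2 * j) := by
    intro j y hy
    have hyr : |y| ≤ r := by
      rw [abs_le]
      exact ⟨hy.1.le, hy.2.le⟩
    have hxp : ‖x ^ (2 * j + 1)‖ ≤ ‖x‖ ^ (2 * j + 1) := norm_pow_le' x (by omega)
    rw [norm_smul, Real.norm_eq_abs, abs_mul, abs_pow]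
    have h2 : |y| ^ (2 * j) ≤ r ^ (2 * j) := pow_le_pow_left₀ (abs_nonneg y) hyr _
    calc |(2:ℝ)| * |y| ^ (2 * j) * ‖x ^ (2 * j + 1)‖
        ≤ 2 * r ^ (2 * j) * ‖x‖ ^ (2 * j + 1) := by
          rw [abs_two]
          gcongr
      _ = 2 * ‖x‖ * (r * ‖x‖) ^ (2 * j) := by
          rw [mul_pow, pow_succ]
          ring
  have h0mem : (0:ℝ) ∈ Ioo (-r) r := by
    constructor <;> [linarith; linarith]
  have hg0 : Summable (fun j : ℕ =>
      ((2 / (2 * (j : ℝ) + 1)) * (0:ℝ) ^ (2 * j + 1)) • x ^ (2 * j + 1)) := by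
    refine summable_zero.congr fun j => ?_
    rw [zero_pow (by omega), mul_zero, zero_smul]
  exact hasDerivAt_tsum_of_isPreconnected husum isOpen_Ioo (convex_Ioo _ _).isPreconnected
    hg hg' h0mem hg0 ht

theorem cayD_mul (x : A) (hx : ‖x‖ < 1) {t : ℝ} (ht : |t| ≤ 1) :
    cayD x t * (1 - (t • x) * (t • x)) = (2 : ℝ) • x := by
  have hz : ‖t • x‖ < 1 := by
    rw [norm_smul, Real.norm_eq_abs]
    calc |t| * ‖x‖ ≤ 1 * ‖x‖ := mul_le_mul_of_nonneg_right ht (norm_nonneg x)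
      _ < 1 := by rwa [one_mul]
  have hzz : ‖(t • x) * (t • x)‖ < 1 := by
    calc ‖(t • x) * (t • x)‖ ≤ ‖t • x‖ * ‖t • x‖ := norm_mul_le _ _
      _ < 1 := by nlinarith [norm_nonneg (t • x)]
  have hgeom : Summable (fun j : ℕ => ((t • x) * (t • x)) ^ j) :=
    summable_geometric_of_norm_lt_one hzz
  have hterm : ∀ j : ℕ, ((2 : ℝ) * t ^ (2 * j)) • x ^ (2 * j + 1)
      = ((t • x) * (t • x)) ^ j * ((2 : ℝ) • x) := by
    intro j
    have h1 : ((t • x) * (t • x)) ^ j = (t • x) ^ (2 * j) := by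
      rw [← sq, ← pow_mul]
    rw [h1, smul_pow, smul_mul_smul_comm, pow_succ]
    congr 1
    ring
  have hd : cayD x t = (∑' j : ℕ, ((t • x) * (t • x)) ^ j) * ((2 : ℝ) • x) := by
    unfold cayD
    rw [tsum_congr hterm]
    exact hgeom.tsum_mul_right _
  have hcx : Commute x ((t • x) * (t • x)) :=
    ((Commute.refl x).smul_right t).mul_right ((Commute.refl x).smul_right t)
  have hcomm2 : ((2:ℝ) • x) * (1 - (t • x) * (t • x))
      = (1 - (t • x) * (t • x)) * ((2:ℝ) • x) :=
    (((Commute.one_right x).sub_right hcx).smul_left (2:ℝ)).eq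
  rw [hd, mul_assoc, hcomm2, ← mul_assoc, geom_series_mul_neg _ hzz, one_mul]

/-- The key identity: `exp (cayS x 1) * (1 - x) = 1 + x`. -/
theorem exp_cayS_mul (x : A) (hx : ‖x‖ < 1) :
    NormedSpace.exp (cayS x 1) * (1 - x) = 1 + x := by
  set r : ℝ := 2 / (1 + ‖x‖) with hr
  have hx0 : (0:ℝ) ≤ ‖x‖ := norm_nonneg x
  have hr1 : 1 < r := by
    rw [hr, lt_div_iff₀ (by linarith)]
    linarith
  set D : ℝ → A := fun t => NormedSpace.exp (cayS x t) * (1 - t • x) - (1 + t • x) with hD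
  set D' : ℝ → A := fun t =>
    (NormedSpace.exp (cayS x t) * cayD x t) * (1 - t • x)
      + NormedSpace.exp (cayS x t) * (-x) - x with hD'
  have hIoo : Icc (0:ℝ) 1 ⊆ Ioo (-r) r := fun t htt => by
    constructor <;> [linarith [htt.1]; linarith [htt.2]]
  have hderiv : ∀ t ∈ Ioo (-r) r, HasDerivAt D (D' t) t := by
    intro t ht
    have hE : HasDerivAt (fun u => NormedSpace.exp (cayS x u))
        (NormedSpace.exp (cayS x t) * cayD x t) t :=
      hasDerivAt_exp_comp (hasDerivAt_cayS x hx ht) (commute_cayS x t)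
    have h1 : HasDerivAt (fun u : ℝ => u • x) ((1:ℝ) • x) t := (hasDerivAt_id t).smul_const x
    have hP : HasDerivAt (fun u : ℝ => (1:A) - u • x) (-x) t := by
      simpa using h1.const_sub 1
    have hQ : HasDerivAt (fun u : ℝ => (1:A) + u • x) x t := by
      simpa using h1.const_add 1
    exact (hE.mul hP).sub hQ
  -- bound on inverses via compactness
  have hunit : ∀ t ∈ Icc (0:ℝ) 1, ‖-(t • x)‖ < 1 := by
    intro t htt
    rw [norm_neg, norm_smul, Real.norm_eq_abs, abs_of_nonneg htt.1]
    calc t * ‖x‖ ≤ 1 * ‖x‖ := by gcongr; exact htt.2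
      _ < 1 := by rwa [one_mul]
  have hcontinv : ContinuousOn (fun t : ℝ => Ring.inverse ((1:A) + t • x)) (Icc 0 1) := by
    intro t htt
    have hV : ((Units.oneSub (-(t • x)) (hunit t htt) : Aˣ) : A) = 1 + t • x := by
      rw [Units.val_oneSub, sub_neg_eq_add]
    have hk : Continuous (fun t : ℝ => (1:A) + t • x) :=
      continuous_const.add (continuous_id.smul continuous_const)
    have h1 : ContinuousAt Ring.inverse ((1:A) + t • x) := by
      rw [← hV]
      exact NormedRing.inverse_continuousAt _
    exact (ContinuousAt.comp (g := Ring.inverse) (f := fun s : ℝ => (1:A) + s • x)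
      h1 hk.continuousAt).continuousWithinAt
  obtain ⟨C, hC⟩ := isCompact_Icc.exists_bound_of_continuousOn hcontinv
  have hC0 : (0:ℝ) ≤ C := le_trans (norm_nonneg _) (hC 0 (by norm_num))
  -- Gronwall
  have hbound : ∀ t ∈ Ico (0:ℝ) 1, ‖D' t‖ ≤ (‖x‖ * C) * ‖D t‖ + 0 := by
    intro t ht
    have htcc : t ∈ Icc (0:ℝ) 1 := ⟨ht.1, ht.2.le⟩
    set V : Aˣ := Units.oneSub (-(t • x)) (hunit t htcc) with hVdef
    have hV : (V : A) = 1 + t • x := by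
      rw [hVdef, Units.val_oneSub, sub_neg_eq_add]
    -- the algebraic identity D' t * (1 + t•x) = x * D t
    have key2 : D' t * (1 + t • x) = x * D t := by
      have habs : |t| ≤ 1 := by
        rw [abs_of_nonneg ht.1]; exact ht.2.le
      have hK1 : cayD x t * (1 - (t • x) * (t • x)) = (2:ℝ) • x := cayD_mul x hx habs
      set e : A := NormedSpace.exp (cayS x t) with he
      set z : A := t • x with hz
      have hxz : Commute x z := (Commute.refl x).smul_right t
      have hxe : Commute x e := (commute_x_cayS x t).exp_right
      have h1 : e * cayD x t * ((1 - z) * (1 + z)) = e * (x + x) := by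
        have : (1 - z) * (1 + z) = 1 - z * z := by noncomm_ring
        rw [this, mul_assoc, hK1, two_smul]
      have h2 : e * (x * z) = x * (e * z) := by
        rw [← mul_assoc, ← hxe.eq, mul_assoc]
      calc (e * cayD x t * (1 - z) + e * (-x) - x) * (1 + z)
          = e * cayD x t * ((1 - z) * (1 + z)) + (e * (-x) - x) * (1 + z) := by
            noncomm_ring
        _ = e * (x + x) + (e * (-x) - x) * (1 + z) := by rw [h1]
        _ = e * x - e * (x * z) - x - x * z := by noncomm_ring
        _ = x * e - x * (e * z) - x - x * z := by rw [hxe.eq, h2]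
        _ = x * (e * (1 - z) - (1 + z)) := by noncomm_ring
    have hD'eq : D' t = x * D t * ((V⁻¹ : Aˣ) : A) := by
      have h3 : D' t * (V : A) = x * D t := by rw [hV]; exact key2
      calc D' t = D' t * ((V : A) * ((V⁻¹ : Aˣ) : A)) := by
            rw [Units.mul_inv, mul_one]
        _ = (D' t * (V : A)) * ((V⁻¹ : Aˣ) : A) := by rw [mul_assoc]
        _ = x * D t * ((V⁻¹ : Aˣ) : A) := by rw [h3]
    have hinv : ‖((V⁻¹ : Aˣ) : A)‖ ≤ C := by
      have : ((V⁻¹ : Aˣ) : A) = Ring.inverse ((1:A) + t • x) := by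
        rw [← hV, Ring.inverse_unit]
      rw [this]
      exact hC t htcc
    rw [hD'eq, add_zero]
    calc ‖x * D t * ((V⁻¹ : Aˣ) : A)‖ ≤ ‖x * D t‖ * ‖((V⁻¹ : Aˣ) : A)‖ := norm_mul_le _ _
      _ ≤ (‖x‖ * ‖D t‖) * C :=
          mul_le_mul (norm_mul_le _ _) hinv (norm_nonneg _) (by positivity)
      _ = (‖x‖ * C) * ‖D t‖ := by ring
  have hcontD : ContinuousOn D (Icc 0 1) := fun t htt =>
    ((hderiv t (hIoo htt)).continuousAt).continuousWithinAt
  have hD0 : ‖D 0‖ ≤ 0 := by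
    have : D 0 = 0 := by
      rw [hD]
      simp [cayS_zero, NormedSpace.exp_zero]
    rw [this, norm_zero]
  have hgron := norm_le_gronwallBound_of_norm_deriv_right_le hcontD
    (fun t ht => (hderiv t (hIoo ⟨ht.1, ht.2.le⟩)).hasDerivWithinAt) hD0 hbound 1
    (by norm_num)
  rw [gronwallBound_ε0_δ0] at hgron
  have hD1 : D 1 = 0 := norm_le_zero_iff.mp hgron
  have : NormedSpace.exp (cayS x 1) * (1 - (1:ℝ) • x) - (1 + (1:ℝ) • x) = 0 := hD1
  rw [one_smul] at this
  exact sub_eq_zero.mp this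

end CayleyAux

/-- In a complex unital Banach algebra, for `‖a‖ < |ζ|` the Cayley transform is the
exponential of the odd series:
`exp(Σ_j 2 a^{2j+1}/((2j+1) ζ^{2j+1})) = (ζ + a)(ζ - a)⁻¹`
(equation (8.4) in the proof of Lemma 8.1 of the paper). -/
theorem cayley_exp_series
    {A : Type*} [NormedRing A] [NormedAlgebra ℂ A] [CompleteSpace A]
    (a : A) (ζ : ℂ) (h : ‖a‖ < ‖ζ‖) :
    IsUnit (ζ • (1 : A) - a) ∧
    Summable (fun j : ℕ =>
      ‖((2 : ℂ) / ((2 * (j : ℂ) + 1) * ζ ^ (2 * j + 1))) • a ^ (2 * j + 1)‖) ∧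
    NormedSpace.exp
        (∑' j : ℕ, ((2 : ℂ) / ((2 * (j : ℂ) + 1) * ζ ^ (2 * j + 1))) • a ^ (2 * j + 1))
      = (ζ • (1 : A) + a) * Ring.inverse (ζ • (1 : A) - a) := by
  have habs : (0:ℝ) < ‖ζ‖ := lt_of_le_of_lt (norm_nonneg a) h
  have hζ : ζ ≠ 0 := by
    intro h0
    rw [h0] at habs
    simp at habs
  set x : A := ζ⁻¹ • a with hxdef
  have hax : ζ • x = a := by
    rw [hxdef, smul_smul, mul_inv_cancel₀ hζ, one_smul]
  have hxnorm : ‖x‖ = ‖a‖ / ‖ζ‖ := by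
    rw [hxdef, norm_smul, norm_inv, inv_mul_eq_div]
  have hx1 : ‖x‖ < 1 := by
    rw [hxnorm]
    exact (div_lt_one habs).mpr h
  -- the unit
  have hsub : ζ • (1:A) - a = ζ • ((1:A) - x) := by rw [smul_sub, hax]
  set u1 : Aˣ := Units.oneSub x hx1 with hu1def
  have hu1 : (u1 : A) = 1 - x := Units.val_oneSub x hx1
  set Uζ : Aˣ := Units.map (algebraMap ℂ A : ℂ →* A) (Units.mk0 ζ hζ) with hUζdef
  have hUζ : (Uζ : A) = algebraMap ℂ A ζ := rfl
  set U : Aˣ := Uζ * u1 with hUdef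
  have hU : (U : A) = ζ • (1:A) - a := by
    rw [hUdef, Units.val_mul, hUζ, hu1, ← Algebra.smul_def, hsub]
  -- summability
  have hCnorm : ∀ j : ℕ, ‖((2 : ℂ) / ((2 * (j : ℂ) + 1) * ζ ^ (2 * j + 1)))‖
      ≤ 2 / ‖ζ‖ ^ (2 * j + 1) := by
    intro j
    have h1 : ((2:ℂ) * (j : ℂ) + 1) = ((2 * j + 1 : ℕ) : ℂ) := by push_cast; ring
    rw [norm_div, norm_mul, h1, norm_pow]
    have h2 : ‖(2:ℂ)‖ = 2 := by norm_num
    rw [h2, Complex.norm_natCast]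
    have hp : (0:ℝ) < ‖ζ‖ ^ (2 * j + 1) := pow_pos habs _
    have hc : (1:ℝ) ≤ ((2 * j + 1 : ℕ) : ℝ) := by
      exact_mod_cast Nat.succ_le_succ (Nat.zero_le _)
    calc 2 / (((2 * j + 1 : ℕ) : ℝ) * ‖ζ‖ ^ (2 * j + 1))
        ≤ 2 / (1 * ‖ζ‖ ^ (2 * j + 1)) := by
          gcongr <;> first | exact hc | positivity | norm_num
      _ = 2 / ‖ζ‖ ^ (2 * j + 1) := by rw [one_mul]
  have hbound : ∀ j : ℕ, ‖((2 : ℂ) / ((2 * (j : ℂ) + 1) * ζ ^ (2 * j + 1))) • a ^ (2 * j + 1)‖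
      ≤ 2 * ‖x‖ ^ (2 * j + 1) := by
    intro j
    rw [norm_smul]
    have hpow : ‖a ^ (2 * j + 1)‖ ≤ ‖a‖ ^ (2 * j + 1) := norm_pow_le' a (by omega)
    calc ‖((2 : ℂ) / ((2 * (j : ℂ) + 1) * ζ ^ (2 * j + 1)))‖ * ‖a ^ (2 * j + 1)‖
        ≤ (2 / ‖ζ‖ ^ (2 * j + 1)) * ‖a‖ ^ (2 * j + 1) :=
          mul_le_mul (hCnorm j) hpow (norm_nonneg _) (by positivity)
      _ = 2 * (‖a‖ / ‖ζ‖) ^ (2 * j + 1) := by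
          rw [div_pow]; ring
      _ = 2 * ‖x‖ ^ (2 * j + 1) := by rw [hxnorm]
  have hgeo : Summable (fun j : ℕ => 2 * ‖x‖ ^ (2 * j + 1)) := by
    have h2 : Summable (fun j : ℕ => (‖x‖ ^ 2) ^ j) :=
      summable_geometric_of_lt_one (by positivity) (by nlinarith [norm_nonneg x])
    exact (h2.mul_left (2 * ‖x‖)).congr fun j => by
      rw [← pow_mul, pow_succ]; ring
  have hsummable : Summable (fun j : ℕ =>
      ‖((2 : ℂ) / ((2 * (j : ℂ) + 1) * ζ ^ (2 * j + 1))) • a ^ (2 * j + 1)‖) :=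
    Summable.of_nonneg_of_le (fun j => norm_nonneg _) hbound hgeo
  refine ⟨⟨U, hU⟩, hsummable, ?_⟩
  -- identify the sum with `cayS x 1`
  have hsum_eq : (∑' j : ℕ, ((2 : ℂ) / ((2 * (j : ℂ) + 1) * ζ ^ (2 * j + 1))) • a ^ (2 * j + 1))
      = CayleyAux.cayS x 1 := by
    unfold CayleyAux.cayS
    refine tsum_congr fun j => ?_
    rw [one_pow, mul_one, hxdef, smul_pow, ← Complex.coe_smul, smul_smul]
    congr 1
    have hne : (2 * (j : ℂ) + 1) ≠ 0 := by
      have h1 : ((2:ℂ) * (j : ℂ) + 1) = ((2 * j + 1 : ℕ) : ℂ) := by push_cast; ring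
      rw [h1]
      exact Nat.cast_ne_zero.mpr (by omega)
    have hζp : ζ ^ (2 * j + 1) ≠ 0 := pow_ne_zero _ hζ
    push_cast
    field_simp
    rw [← mul_pow, mul_one_div_cancel hζ, one_pow]
  have hfinal : NormedSpace.exp (CayleyAux.cayS x 1) * (U : A) = ζ • (1:A) + a := by
    rw [hU, hsub, mul_smul_comm, CayleyAux.exp_cayS_mul x hx1, smul_add, hax]
  rw [hsum_eq, ← hU, Ring.inverse_unit, ← hfinal, Units.mul_inv_cancel_right]
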